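/- Let G = G_l ⊗ G_r be a true twin composition, and assume D_k(H) ≠ ∅ for each H ∈ {G, G_l, G_r} and each 0 ≤ k ≤ |TS(H)|. For D ⊆ V(G), set D_l = D ∩ V(G_l) and D_r = D ∩ V(G_r). Then D ∈ Ψ(G) if and only if D_l ∈ Ψ(G_l) and D_r ∈ Ψ(G_r). -/
import Mathlib


/-- A finite simple graph on a subset of an ambient vertex type `α`,
together with a designated twin set `TS ⊆ verts`. -/
structure TSGraph (α : Type*) where
  verts : Finset α
  Adj : α → α → Prop
  symm : ∀ u v, Adj u v → Adj v u
  irrefl : ∀ u, ¬ Adj u u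
  adj_mem : ∀ u v, Adj u v → u ∈ verts ∧ v ∈ verts
  TS : Finset α
  TS_sub : TS ⊆ verts

namespace TSGraph

variable {α : Type*} [DecidableEq α]

/-- `f` encodes a perfect matching of the subgraph of `G` induced by `S`:
every vertex of `S` is paired with an adjacent vertex of `S`, involutively. -/
def IsPM (G : TSGraph α) (S : Finset α) (f : α → α) : Prop :=
  ∀ v ∈ S, f v ∈ S ∧ G.Adj v (f v) ∧ f (f v) = v

/-- `S ⊆ V(G)` dominates `V(G) − TS(G)` and, for some `X ⊆ S ∩ TS(G)` of size `k`,
the subgraph induced by `S − X` has a perfect matching. -/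
def Adm (G : TSGraph α) (k : ℕ) (S : Finset α) : Prop :=
  S ⊆ G.verts ∧
  (∀ v ∈ G.verts, v ∉ G.TS → v ∈ S ∨ ∃ u ∈ S, G.Adj u v) ∧
  ∃ X ⊆ S ∩ G.TS, X.card = k ∧ ∃ f, G.IsPM (S \ X) f

/-- Membership in the family `D_k(G)`: admissible of minimum cardinality. -/
def memD (G : TSGraph α) (k : ℕ) (S : Finset α) : Prop :=
  G.Adm k S ∧ ∀ S', G.Adm k S' → S.card ≤ S'.card

/-- `D_k(G) ≠ ∅`. -/
def DkNonempty (G : TSGraph α) (k : ℕ) : Prop := ∃ S, G.memD k S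

/-- `D_k(G) ≠ ∅` for all `0 ≤ k ≤ |TS(G)|`. -/
def AllDkNonempty (G : TSGraph α) : Prop := ∀ k ≤ G.TS.card, G.DkNonempty k

/-- `γ_k(G)`: the common cardinality of the members of `D_k(G)`. -/
noncomputable def gamma (G : TSGraph α) (k : ℕ) : ℕ :=
  sInf {n | ∃ S, G.Adm k S ∧ S.card = n}

/-- A paired-dominating set of `G`. -/
def IsPDS (G : TSGraph α) (D : Finset α) : Prop :=
  D ⊆ G.verts ∧
  (∀ v ∈ G.verts, v ∈ D ∨ ∃ u ∈ D, G.Adj u v) ∧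
  ∃ f, G.IsPM D f

/-- `γ_p(G)`: the paired-domination number. -/
noncomputable def gammaP (G : TSGraph α) : ℕ :=
  sInf {n | ∃ D, G.IsPDS D ∧ D.card = n}

/-- Membership in `D_p(G)`: minimum-cardinality paired-dominating sets. -/
def memDp (G : TSGraph α) (D : Finset α) : Prop :=
  G.IsPDS D ∧ D.card = G.gammaP

/-- `min(G) = min { γ_k(G) : 0 ≤ k ≤ |TS(G)| }`. -/
noncomputable def minVal (G : TSGraph α) : ℕ :=
  sInf {n | ∃ k ≤ G.TS.card, G.gamma k = n}

/-- `α(G)`: the smallest `k` with `γ_k(G) = min(G)`. -/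
noncomputable def alphaVal (G : TSGraph α) : ℕ :=
  sInf {k | k ≤ G.TS.card ∧ G.gamma k = G.minVal}

/-- `β(G)`: the largest `k` with `γ_k(G) = min(G)`. -/
noncomputable def betaVal (G : TSGraph α) : ℕ :=
  sSup {k | k ≤ G.TS.card ∧ G.gamma k = G.minVal}

/-- Membership in `Ψ(G)`: sets in some `D_k(G)` of cardinality `min(G)`. -/
def memPsi (G : TSGraph α) (D : Finset α) : Prop :=
  (∃ k, k ≤ G.TS.card ∧ G.memD k D) ∧ D.card = G.minVal

/-- Equation (2) holds for `G`. -/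
def Eq2Holds (G : TSGraph α) : Prop :=
  ∀ k ≤ G.TS.card,
    (k ≤ G.alphaVal → G.gamma k = G.minVal + G.alphaVal - k) ∧
    (G.betaVal ≤ k → G.gamma k = G.minVal + k - G.betaVal) ∧
    (G.alphaVal < k → k < G.betaVal → Even (k - G.alphaVal) → G.gamma k = G.minVal) ∧
    (G.alphaVal < k → k < G.betaVal → ¬ Even (k - G.alphaVal) → G.gamma k = G.minVal + 1)

/-- `G = Gl ⊗ Gr` (true twin composition). -/
def IsTrueTwin (G Gl Gr : TSGraph α) : Prop :=
  Disjoint Gl.verts Gr.verts ∧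
  G.verts = Gl.verts ∪ Gr.verts ∧
  (∀ u v, G.Adj u v ↔ Gl.Adj u v ∨ Gr.Adj u v ∨
    (u ∈ Gl.TS ∧ v ∈ Gr.TS) ∨ (u ∈ Gr.TS ∧ v ∈ Gl.TS)) ∧
  G.TS = Gl.TS ∪ Gr.TS

/-- `G = Gl ⊙ Gr` (false twin composition). -/
def IsFalseTwin (G Gl Gr : TSGraph α) : Prop :=
  Disjoint Gl.verts Gr.verts ∧
  G.verts = Gl.verts ∪ Gr.verts ∧
  (∀ u v, G.Adj u v ↔ Gl.Adj u v ∨ Gr.Adj u v) ∧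
  G.TS = Gl.TS ∪ Gr.TS

/-- `G = Gl ⊕ Gr` (attachment composition). -/
def IsAttach (G Gl Gr : TSGraph α) : Prop :=
  Disjoint Gl.verts Gr.verts ∧
  G.verts = Gl.verts ∪ Gr.verts ∧
  (∀ u v, G.Adj u v ↔ Gl.Adj u v ∨ Gr.Adj u v ∨
    (u ∈ Gl.TS ∧ v ∈ Gr.TS) ∨ (u ∈ Gr.TS ∧ v ∈ Gl.TS)) ∧
  G.TS = Gl.TS

/-- The twin-set graph `G` arises from a decomposition tree all of whose associated
twin-set graphs satisfy the property `P`. -/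
inductive FromDecompTree (P : TSGraph α → Prop) : TSGraph α → Prop where
  | single (G : TSGraph α) (v : α) (hv : G.verts = {v}) (hts : G.TS = {v})
      (hadj : ∀ u w, ¬ G.Adj u w) (hP : P G) : FromDecompTree P G
  | ttwin (G Gl Gr : TSGraph α) (hl : FromDecompTree P Gl) (hr : FromDecompTree P Gr)
      (h : IsTrueTwin G Gl Gr) (hP : P G) : FromDecompTree P G
  | ftwin (G Gl Gr : TSGraph α) (hl : FromDecompTree P Gl) (hr : FromDecompTree P Gr)
      (h : IsFalseTwin G Gl Gr) (hP : P G) : FromDecompTree P G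
  | attach (G Gl Gr : TSGraph α) (hl : FromDecompTree P Gl) (hr : FromDecompTree P Gr)
      (h : IsAttach G Gl Gr) (hP : P G) : FromDecompTree P G

section Aux

variable {α : Type*} [DecidableEq α] {G Gl Gr : TSGraph α}

lemma gamma_le_card {k : ℕ} {S : Finset α} (h : G.Adm k S) : G.gamma k ≤ S.card :=
  Nat.sInf_le ⟨S, h, rfl⟩

lemma memD_card {k : ℕ} {S : Finset α} (h : G.memD k S) : S.card = G.gamma k := by
  refine le_antisymm ?_ (gamma_le_card h.1)
  have hne : {n | ∃ S', G.Adm k S' ∧ S'.card = n}.Nonempty := ⟨S.card, S, h.1, rfl⟩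
  obtain ⟨S'', hS'', hc⟩ := Nat.sInf_mem hne
  rw [gamma, ← hc]
  exact h.2 S'' hS''

lemma minVal_le_gamma {k : ℕ} (hk : k ≤ G.TS.card) : G.minVal ≤ G.gamma k :=
  Nat.sInf_le ⟨k, hk, rfl⟩

lemma exists_minVal_witness (hG : G.AllDkNonempty) :
    ∃ k ≤ G.TS.card, ∃ S, G.memD k S ∧ S.card = G.minVal := by
  have hne : {n | ∃ k ≤ G.TS.card, G.gamma k = n}.Nonempty :=
    ⟨G.gamma 0, 0, Nat.zero_le _, rfl⟩
  obtain ⟨k, hk, hgk⟩ := Nat.sInf_mem hne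
  obtain ⟨S, hS⟩ := hG k hk
  exact ⟨k, hk, S, hS, by rw [memD_card hS]; exact hgk⟩

lemma IsTrueTwin.flip (h : IsTrueTwin G Gl Gr) : IsTrueTwin G Gr Gl := by
  obtain ⟨hdis, hverts, hadj, hTS⟩ := h
  exact ⟨hdis.symm, by rw [hverts, Finset.union_comm],
    fun u v => by rw [hadj u v]; tauto, by rw [hTS, Finset.union_comm]⟩

lemma split_left (hcomp : IsTrueTwin G Gl Gr) {k : ℕ} {S : Finset α} (h : G.Adm k S) :
    ∃ kl ≤ Gl.TS.card, Gl.Adm kl (S ∩ Gl.verts) := by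
  obtain ⟨hdis, hverts, hadj, hTS⟩ := hcomp
  obtain ⟨hSsub, hdom, X, hXsub, hXcard, f, hf⟩ := h
  have hnotR : ∀ v ∈ Gl.verts, v ∉ Gr.verts := fun v hv => Finset.disjoint_left.mp hdis hv
  have hTSrR : ∀ v ∈ Gl.verts, v ∉ Gr.TS := fun v hv h' => hnotR v hv (Gr.TS_sub h')
  set Cl : Finset α := ((S \ X) ∩ Gl.verts).filter (fun v => f v ∈ Gr.verts) with hCl
  have hClTS : Cl ⊆ Gl.TS := by
    intro v hv
    simp only [hCl, Finset.mem_filter, Finset.mem_inter, Finset.mem_sdiff] at hv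
    obtain ⟨⟨⟨hvS, hvX⟩, hvVl⟩, hfv⟩ := hv
    obtain ⟨hfvS, hAdj, _⟩ := hf v (Finset.mem_sdiff.mpr ⟨hvS, hvX⟩)
    rcases (hadj v (f v)).mp hAdj with h' | h' | h' | h'
    · exact absurd hfv (hnotR _ (Gl.adj_mem _ _ h').2)
    · exact absurd (Gr.adj_mem _ _ h').1 (hnotR v hvVl)
    · exact h'.1
    · exact absurd (Gr.TS_sub h'.1) (hnotR v hvVl)
  have hClsub : Cl ⊆ (S \ X) ∩ Gl.verts := Finset.filter_subset _ _
  set Xl : Finset α := (X ∩ Gl.verts) ∪ Cl with hXl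
  have hXlsub : Xl ⊆ (S ∩ Gl.verts) ∩ Gl.TS := by
    intro v hv
    rcases Finset.mem_union.mp hv with hv | hv
    · obtain ⟨hvX, hvVl⟩ := Finset.mem_inter.mp hv
      obtain ⟨hvS, hvTS⟩ := Finset.mem_inter.mp (hXsub hvX)
      have hvTSl : v ∈ Gl.TS := by
        rw [hTS] at hvTS
        rcases Finset.mem_union.mp hvTS with h' | h'
        · exact h'
        · exact absurd h' (hTSrR v hvVl)
      exact Finset.mem_inter.mpr ⟨Finset.mem_inter.mpr ⟨hvS, hvVl⟩, hvTSl⟩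
    · obtain ⟨hvSX, hvVl⟩ := Finset.mem_inter.mp (hClsub hv)
      exact Finset.mem_inter.mpr ⟨Finset.mem_inter.mpr
        ⟨(Finset.mem_sdiff.mp hvSX).1, hvVl⟩, hClTS hv⟩
  refine ⟨Xl.card, le_trans (Finset.card_le_card
    (hXlsub.trans Finset.inter_subset_right)) le_rfl, ?_, ?_, ⟨Xl, hXlsub, rfl, f, ?_⟩⟩
  · exact Finset.inter_subset_right
  · -- domination
    intro v hvVl hvTSl
    have hvV : v ∈ G.verts := by rw [hverts]; exact Finset.mem_union_left _ hvVl
    have hvTS : v ∉ G.TS := by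
      rw [hTS, Finset.mem_union]
      rintro (h' | h')
      · exact hvTSl h'
      · exact hTSrR v hvVl h'
    rcases hdom v hvV hvTS with h' | ⟨u, huS, hAdj⟩
    · exact Or.inl (Finset.mem_inter.mpr ⟨h', hvVl⟩)
    · rcases (hadj u v).mp hAdj with h' | h' | h' | h'
      · exact Or.inr ⟨u, Finset.mem_inter.mpr ⟨huS, (Gl.adj_mem _ _ h').1⟩, h'⟩
      · exact absurd (Gr.adj_mem _ _ h').2 (hnotR v hvVl)
      · exact absurd h'.2 (hTSrR v hvVl)
      · exact absurd h'.2 hvTSl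
  · -- perfect matching
    intro v hv
    obtain ⟨hvSVl, hvXl⟩ := Finset.mem_sdiff.mp hv
    obtain ⟨hvS, hvVl⟩ := Finset.mem_inter.mp hvSVl
    rw [hXl, Finset.mem_union, not_or] at hvXl
    obtain ⟨hvXVl, hvCl⟩ := hvXl
    have hvX : v ∉ X := fun h' => hvXVl (Finset.mem_inter.mpr ⟨h', hvVl⟩)
    have hvSX : v ∈ S \ X := Finset.mem_sdiff.mpr ⟨hvS, hvX⟩
    obtain ⟨hfvSX, hAdj, hff⟩ := hf v hvSX
    have hfvVr : f v ∉ Gr.verts := by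
      intro h'
      exact hvCl (Finset.mem_filter.mpr ⟨Finset.mem_inter.mpr ⟨hvSX, hvVl⟩, h'⟩)
    have hfvVl : f v ∈ Gl.verts := by
      have : f v ∈ G.verts := hSsub (Finset.mem_sdiff.mp hfvSX).1
      rw [hverts, Finset.mem_union] at this
      tauto
    have hAdjl : Gl.Adj v (f v) := by
      rcases (hadj v (f v)).mp hAdj with h' | h' | h' | h'
      · exact h'
      · exact absurd (Gr.adj_mem _ _ h').1 (hnotR v hvVl)
      · exact absurd (Gr.TS_sub h'.2) hfvVr
      · exact absurd (Gr.TS_sub h'.1) (hnotR v hvVl)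
    refine ⟨Finset.mem_sdiff.mpr ⟨Finset.mem_inter.mpr
      ⟨(Finset.mem_sdiff.mp hfvSX).1, hfvVl⟩, ?_⟩, hAdjl, hff⟩
    rw [hXl, Finset.mem_union, not_or]
    constructor
    · intro h'
      exact (Finset.mem_sdiff.mp hfvSX).2 (Finset.mem_inter.mp h').1
    · intro h'
      have := (Finset.mem_filter.mp h').2
      rw [hff] at this
      exact hnotR v hvVl this

lemma join (hcomp : IsTrueTwin G Gl Gr) {kl kr : ℕ} {Sl Sr : Finset α}
    (hl : Gl.Adm kl Sl) (hr : Gr.Adm kr Sr) : G.Adm (kl + kr) (Sl ∪ Sr) := by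
  obtain ⟨hdis, hverts, hadj, hTS⟩ := hcomp
  obtain ⟨hlsub, hldom, Xl, hXlsub, hXlcard, fl, hfl⟩ := hl
  obtain ⟨hrsub, hrdom, Xr, hXrsub, hXrcard, fr, hfr⟩ := hr
  have hnotR : ∀ v ∈ Gl.verts, v ∉ Gr.verts := fun v hv => Finset.disjoint_left.mp hdis hv
  have hXlV : Xl ⊆ Gl.verts := fun v hv => hlsub (Finset.mem_inter.mp (hXlsub hv)).1
  have hXrV : Xr ⊆ Gr.verts := fun v hv => hrsub (Finset.mem_inter.mp (hXrsub hv)).1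
  have hXdis : Disjoint Xl Xr :=
    Finset.disjoint_left.mpr (fun v hv h' => hnotR v (hXlV hv) (hXrV h'))
  refine ⟨?_, ?_, ⟨Xl ∪ Xr, ?_, ?_, ?_⟩⟩
  · rw [hverts]; exact Finset.union_subset_union hlsub hrsub
  · intro v hvV hvTS
    rw [hverts, Finset.mem_union] at hvV
    rw [hTS, Finset.mem_union, not_or] at hvTS
    rcases hvV with hv | hv
    · rcases hldom v hv hvTS.1 with h' | ⟨u, hu, hAdj⟩
      · exact Or.inl (Finset.mem_union_left _ h')
      · exact Or.inr ⟨u, Finset.mem_union_left _ hu, (hadj u v).mpr (Or.inl hAdj)⟩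
    · rcases hrdom v hv hvTS.2 with h' | ⟨u, hu, hAdj⟩
      · exact Or.inl (Finset.mem_union_right _ h')
      · exact Or.inr ⟨u, Finset.mem_union_right _ hu, (hadj u v).mpr (Or.inr (Or.inl hAdj))⟩
  · intro v hv
    rw [hTS]
    rcases Finset.mem_union.mp hv with h' | h'
    · have := hXlsub h'
      rw [Finset.mem_inter] at this ⊢
      exact ⟨Finset.mem_union_left _ this.1, Finset.mem_union_left _ this.2⟩
    · have := hXrsub h'
      rw [Finset.mem_inter] at this ⊢
      exact ⟨Finset.mem_union_right _ this.1, Finset.mem_union_right _ this.2⟩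
  · rw [Finset.card_union_of_disjoint hXdis, hXlcard, hXrcard]
  · refine ⟨fun v => if v ∈ Gl.verts then fl v else fr v, ?_⟩
    intro v hv
    obtain ⟨hvS, hvX⟩ := Finset.mem_sdiff.mp hv
    rw [Finset.mem_union, not_or] at hvX
    rcases Finset.mem_union.mp hvS with hvl | hvr
    · have hvVl : v ∈ Gl.verts := hlsub hvl
      obtain ⟨hm, hAdj, hff⟩ := hfl v (Finset.mem_sdiff.mpr ⟨hvl, hvX.1⟩)
      obtain ⟨hmS, hmX⟩ := Finset.mem_sdiff.mp hm
      have hmVl : fl v ∈ Gl.verts := hlsub hmS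
      simp only [if_pos hvVl, if_pos hmVl]
      refine ⟨Finset.mem_sdiff.mpr ⟨Finset.mem_union_left _ hmS, ?_⟩,
        (hadj v (fl v)).mpr (Or.inl hAdj), hff⟩
      rw [Finset.mem_union, not_or]
      exact ⟨hmX, fun h' => hnotR _ hmVl (hXrV h')⟩
    · have hvVr : v ∈ Gr.verts := hrsub hvr
      have hvVl : v ∉ Gl.verts := fun h' => hnotR v h' hvVr
      obtain ⟨hm, hAdj, hff⟩ := hfr v (Finset.mem_sdiff.mpr ⟨hvr, hvX.2⟩)
      obtain ⟨hmS, hmX⟩ := Finset.mem_sdiff.mp hm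
      have hmVr : fr v ∈ Gr.verts := hrsub hmS
      have hmVl : fr v ∉ Gl.verts := fun h' => hnotR _ h' hmVr
      simp only [if_neg hvVl, if_neg hmVl]
      refine ⟨Finset.mem_sdiff.mpr ⟨Finset.mem_union_right _ hmS, ?_⟩,
        (hadj v (fr v)).mpr (Or.inr (Or.inl hAdj)), hff⟩
      rw [Finset.mem_union, not_or]
      exact ⟨fun h' => hnotR _ (hXlV h') hmVr, hmX⟩

lemma card_split (hcomp : IsTrueTwin G Gl Gr) {D : Finset α} (hD : D ⊆ G.verts) :
    D = (D ∩ Gl.verts) ∪ (D ∩ Gr.verts) ∧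
    D.card = (D ∩ Gl.verts).card + (D ∩ Gr.verts).card := by
  obtain ⟨hdis, hverts, -, -⟩ := hcomp
  have heq : D = (D ∩ Gl.verts) ∪ (D ∩ Gr.verts) := by
    rw [← Finset.inter_union_distrib_left, ← hverts, Finset.inter_eq_left.mpr hD]
  refine ⟨heq, ?_⟩
  conv_lhs => rw [heq]
  exact Finset.card_union_of_disjoint
    (Finset.disjoint_of_subset_left Finset.inter_subset_right
      (Finset.disjoint_of_subset_right Finset.inter_subset_right hdis))

lemma lower_bound (hcomp : IsTrueTwin G Gl Gr) {k : ℕ} {S : Finset α} (h : G.Adm k S) :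
    Gl.minVal + Gr.minVal ≤ S.card := by
  obtain ⟨kl, hkl, hAdml⟩ := split_left hcomp h
  obtain ⟨kr, hkr, hAdmr⟩ := split_left hcomp.flip h
  have h1 : Gl.minVal ≤ (S ∩ Gl.verts).card := (minVal_le_gamma hkl).trans (gamma_le_card hAdml)
  have h2 : Gr.minVal ≤ (S ∩ Gr.verts).card := (minVal_le_gamma hkr).trans (gamma_le_card hAdmr)
  have h3 := (card_split hcomp h.1).2
  omega

lemma min_eq (hcomp : IsTrueTwin G Gl Gr) (hG : G.AllDkNonempty)
    (hGl : Gl.AllDkNonempty) (hGr : Gr.AllDkNonempty) :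
    G.minVal = Gl.minVal + Gr.minVal := by
  obtain ⟨k, hk, S, hS, hcard⟩ := exists_minVal_witness hG
  obtain ⟨kl, hkl, Sl, hSl, hcardl⟩ := exists_minVal_witness hGl
  obtain ⟨kr, hkr, Sr, hSr, hcardr⟩ := exists_minVal_witness hGr
  refine le_antisymm ?_ (hcard ▸ lower_bound hcomp hS.1)
  have hAdm : G.Adm (kl + kr) (Sl ∪ Sr) := join hcomp hSl.1 hSr.1
  have hdisS : Disjoint Sl Sr :=
    Finset.disjoint_of_subset_left hSl.1.1 (Finset.disjoint_of_subset_right hSr.1.1 hcomp.1)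
  have hkbound : kl + kr ≤ G.TS.card := by
    have hdisTS : Disjoint Gl.TS Gr.TS :=
      Finset.disjoint_of_subset_left Gl.TS_sub (Finset.disjoint_of_subset_right Gr.TS_sub hcomp.1)
    rw [hcomp.2.2.2, Finset.card_union_of_disjoint hdisTS]
    omega
  calc G.minVal ≤ G.gamma (kl + kr) := minVal_le_gamma hkbound
    _ ≤ (Sl ∪ Sr).card := gamma_le_card hAdm
    _ = Sl.card + Sr.card := Finset.card_union_of_disjoint hdisS
    _ = Gl.minVal + Gr.minVal := by rw [hcardl, hcardr]

end Aux

end TSGraph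

open TSGraph in
/-- For a true twin composition `G = Gl ⊗ Gr` with all `D_k`
families nonempty and `D ⊆ V(G)`: `D ∈ Ψ(G)` iff `D ∩ V(Gl) ∈ Ψ(Gl)` and
`D ∩ V(Gr) ∈ Ψ(Gr)`. -/
theorem stmt7 {α : Type*} [DecidableEq α] (G Gl Gr : TSGraph α)
    (hcomp : IsTrueTwin G Gl Gr)
    (hG : G.AllDkNonempty) (hGl : Gl.AllDkNonempty) (hGr : Gr.AllDkNonempty)
    (D : Finset α) (hD : D ⊆ G.verts) :
    G.memPsi D ↔ (Gl.memPsi (D ∩ Gl.verts) ∧ Gr.memPsi (D ∩ Gr.verts)) := by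
  have hmineq := min_eq hcomp hG hGl hGr
  constructor
  · rintro ⟨⟨k, hk, hmemD⟩, hcard⟩
    obtain ⟨kl, hkl, hAdml⟩ := split_left hcomp hmemD.1
    obtain ⟨kr, hkr, hAdmr⟩ := split_left hcomp.flip hmemD.1
    have h1 : Gl.minVal ≤ (D ∩ Gl.verts).card := (minVal_le_gamma hkl).trans (gamma_le_card hAdml)
    have h2 : Gr.minVal ≤ (D ∩ Gr.verts).card := (minVal_le_gamma hkr).trans (gamma_le_card hAdmr)
    have h3 := (card_split hcomp hD).2
    have hcl : (D ∩ Gl.verts).card = Gl.minVal := by omega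
    have hcr : (D ∩ Gr.verts).card = Gr.minVal := by omega
    constructor
    · exact ⟨⟨kl, hkl, hAdml, fun S' hS' => by
        calc (D ∩ Gl.verts).card = Gl.minVal := hcl
          _ ≤ Gl.gamma kl := minVal_le_gamma hkl
          _ ≤ S'.card := gamma_le_card hS'⟩, hcl⟩
    · exact ⟨⟨kr, hkr, hAdmr, fun S' hS' => by
        calc (D ∩ Gr.verts).card = Gr.minVal := hcr
          _ ≤ Gr.gamma kr := minVal_le_gamma hkr
          _ ≤ S'.card := gamma_le_card hS'⟩, hcr⟩
  · rintro ⟨⟨⟨kl, hkl, hDl⟩, hcardl⟩, ⟨kr, hkr, hDr⟩, hcardr⟩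
    obtain ⟨heq, h3⟩ := card_split hcomp hD
    have hAdm : G.Adm (kl + kr) D := by
      rw [heq]; exact join hcomp hDl.1 hDr.1
    have hkbound : kl + kr ≤ G.TS.card := by
      have hdisTS : Disjoint Gl.TS Gr.TS :=
        Finset.disjoint_of_subset_left Gl.TS_sub
          (Finset.disjoint_of_subset_right Gr.TS_sub hcomp.1)
      rw [hcomp.2.2.2, Finset.card_union_of_disjoint hdisTS]
      omega
    have hcard : D.card = G.minVal := by omega
    exact ⟨⟨kl + kr, hkbound, hAdm, fun S' hS' => by
      have := lower_bound hcomp hS'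
      omega⟩, hcard⟩
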